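/- If μ ∈ ⟦𝒯⟧_G for a well-designed pattern tree 𝒯 in NR normal form, then the witnessing subtree is unique: there is exactly one subtree 𝒯' of 𝒯 such that μ is a homomorphism from pat(𝒯') to G with dom(μ) = vars(𝒯'). -/

import Mathlib

/-- IRIs -/
abbrev Iri := ℕ
/-- Variables -/
abbrev Var := ℕ
/-- A term is an IRI or a variable. -/
abbrev SPTerm := Iri ⊕ Var
/-- A triple pattern. -/
abbrev TriplePat := SPTerm × SPTerm × SPTerm
/-- A t-graph: a finite set of triple patterns. -/
abbrev TGraph := Finset TriplePat

/-- Variables occurring in a triple pattern. -/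
def tvars (t : TriplePat) : Set Var :=
  {v | t.1 = Sum.inr v ∨ t.2.1 = Sum.inr v ∨ t.2.2 = Sum.inr v}

/-- Variables occurring in a t-graph. -/
def gvars (S : TGraph) : Set Var := ⋃ t ∈ S, tvars t

/-- Apply a variable substitution to a term. -/
def applyTerm (h : Var → SPTerm) : SPTerm → SPTerm
  | Sum.inl i => Sum.inl i
  | Sum.inr v => h v

/-- Apply a variable substitution to a triple pattern. -/
def applyTriple (h : Var → SPTerm) (t : TriplePat) : TriplePat :=
  (applyTerm h t.1, applyTerm h t.2.1, applyTerm h t.2.2)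

/-- `h` is a homomorphism from `(S,X)` to `(S',X)`: it fixes `X` pointwise and
maps every triple of `S` into `S'`. -/
def IsHom (S S' : TGraph) (X : Set Var) (h : Var → SPTerm) : Prop :=
  (∀ x ∈ X, h x = Sum.inr x) ∧ ∀ t ∈ S, applyTriple h t ∈ S'

/-- `(S,X) → (S',X)`: existence of a homomorphism. -/
def Hom (S S' : TGraph) (X : Set Var) : Prop := ∃ h, IsHom S S' X h

/-- An RDF triple (over IRIs only). -/
abbrev RTriple := Iri × Iri × Iri
/-- An RDF graph: a finite set of RDF triples. -/
abbrev RDFGraph := Finset RTriple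

/-- View an RDF triple as a triple pattern. -/
def liftTriple (t : RTriple) : TriplePat :=
  (Sum.inl t.1, Sum.inl t.2.1, Sum.inl t.2.2)

/-- The triple obtained by applying `h : Var → Iri` to `t` lies in `G`. -/
def mapsTriple (h : Var → Iri) (t : TriplePat) (G : RDFGraph) : Prop :=
  applyTriple (fun v => Sum.inl (h v)) t ∈ G.image liftTriple

/-- `(S,X) →^μ G`: there is a homomorphism from `S` to the RDF graph `G`
agreeing with `μ` on `X`. -/
def HomToRDF (S : TGraph) (X : Set Var) (G : RDFGraph) (μ : Var → Iri) : Prop :=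
  ∃ h : Var → Iri, (∀ x ∈ X, h x = μ x) ∧ ∀ t ∈ S, mapsTriple h t G


open SimpleGraph

lemma induce_walk_of_reachable {N : Type} {T : SimpleGraph N} {A : Set N} {a b : N}
    {ha : a ∈ A} {hb : b ∈ A}
    (h : (T.induce A).Reachable ⟨a, ha⟩ ⟨b, hb⟩) :
    ∃ W : T.Walk a b, ∀ v ∈ W.support, v ∈ A := by
  obtain ⟨w⟩ := h
  refine ⟨w.map (SimpleGraph.Embedding.induce A).toHom, ?_⟩
  intro v hv
  change v ∈ (w.map (SimpleGraph.Embedding.induce A).toHom).support at hv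
  rw [SimpleGraph.Walk.support_map, List.mem_map] at hv
  obtain ⟨⟨u, hu⟩, _, rfl⟩ := hv
  exact hu

lemma key_tree_lemma {N : Type} [DecidableEq N] {T : SimpleGraph N} (hT : T.IsTree) {r p n : N}
    (hadj : T.Adj p n) (hdist : T.dist r p + 1 = T.dist r n)
    {S : Set N} (hS : (T.induce S).Preconnected) (hnS : n ∈ S) (hpS : p ∉ S)
    {A : Set N} (hrA : r ∈ A) (hA : (T.induce A).Connected)
    {m : N} (hmA : m ∈ A) (hmS : m ∈ S) : n ∈ A := by
  obtain ⟨Prp, hPrp⟩ := (hT.isConnected.preconnected r p).exists_walk_length_eq_dist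
  set Q : T.Walk r n := Prp.append (Walk.cons hadj Walk.nil) with hQdef
  have hQlen : Q.length = T.dist r n := by
    simp [hQdef, Walk.length_append, hPrp]; omega
  have hQpath : Q.IsPath := Q.isPath_of_length_eq_dist hQlen
  have hpQ : p ∈ Q.support := by
    rw [hQdef, Walk.mem_support_append_iff]; right; simp
  obtain ⟨W2, hW2⟩ := induce_walk_of_reachable (hS ⟨n, hnS⟩ ⟨m, hmS⟩)
  set Pnm := W2.bypass with hPnmdef
  have hPnmS : ∀ v ∈ Pnm.support, v ∈ S := fun v hv => hW2 v (W2.support_bypass_subset hv)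
  have hpPnm : p ∉ Pnm.support := fun h => hpS (hPnmS p h)
  obtain ⟨W1, hW1⟩ := induce_walk_of_reachable (hA.preconnected ⟨r, hrA⟩ ⟨m, hmA⟩)
  set Prm := W1.bypass with hPrmdef
  have hPrmpath : Prm.IsPath := W1.bypass_isPath
  have hPrmA : ∀ v ∈ Prm.support, v ∈ A := fun v hv => hW1 v (W1.support_bypass_subset hv)
  set V : T.Walk r n := Prm.append Pnm.reverse with hVdef
  have hQV : Q = V.bypass := (hT.existsUnique_path r n).unique hQpath V.bypass_isPath
  have hpV : p ∈ V.support := V.support_bypass_subset (hQV ▸ hpQ)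
  have hpPrm : p ∈ Prm.support := by
    rcases (Walk.mem_support_append_iff _ _).1 hpV with h | h
    · exact h
    · exact absurd (by rwa [Walk.support_reverse, List.mem_reverse] at h) hpPnm
  set Q' : T.Walk p m := Walk.cons hadj Pnm with hQ'def
  have hQ'path : Q'.IsPath := (Walk.cons_isPath_iff hadj Pnm).2 ⟨W2.bypass_isPath, hpPnm⟩
  have hdq : Prm.dropUntil p hpPrm = Q' :=
    (hT.existsUnique_path p m).unique (hPrmpath.dropUntil hpPrm) hQ'path
  have hnPrm : n ∈ Prm.support := by
    apply Walk.support_dropUntil_subset Prm hpPrm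
    rw [hdq, hQ'def, Walk.support_cons]
    exact List.mem_cons_of_mem _ Pnm.start_mem_support
  exact hPrmA n hnPrm

/-- in a well-designed pattern tree in NR normal form, the
subtree witnessing `μ ∈ ⟦𝒯⟧_G` is unique: there is at most one subtree `𝒯'`
(a connected set of nodes containing the root) such that `μ` is a homomorphism
from `pat(𝒯')` to `G` with `dom(μ) = vars(𝒯')`. -/
theorem witness_subtree_unique {N : Type} [Fintype N]
    (T : SimpleGraph N) (hT : T.IsTree) (r : N) (lab : N → TGraph)
    -- wdPT condition: the occurrences of each variable form a connected subgraph
    (hconn : ∀ x : Var, (T.induce {n | x ∈ gvars (lab n)}).Preconnected)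
    -- `parent n` is the parent of a non-root node `n`
    (parent : N → N)
    (hparent : ∀ n, n ≠ r → T.Adj (parent n) n ∧
      T.dist r (parent n) + 1 = T.dist r n)
    -- NR normal form: every non-root node has a variable not in its parent
    (hNR : ∀ n, n ≠ r → ∃ x ∈ gvars (lab n), x ∉ gvars (lab (parent n)))
    (G : RDFGraph) (μ : Var → Iri) (D : Set Var) -- D is the domain of μ
    (A₁ A₂ : Set N)
    (h₁ : r ∈ A₁ ∧ (T.induce A₁).Connected)
    (h₂ : r ∈ A₂ ∧ (T.induce A₂).Connected)
    (hv₁ : (⋃ n ∈ A₁, gvars (lab n)) = D)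
    (hv₂ : (⋃ n ∈ A₂, gvars (lab n)) = D)
    (hm₁ : ∀ n ∈ A₁, ∀ t ∈ lab n, mapsTriple μ t G)
    (hm₂ : ∀ n ∈ A₂, ∀ t ∈ lab n, mapsTriple μ t G) :
    A₁ = A₂ := by
  classical
  have main : ∀ (B C : Set N), r ∈ B → r ∈ C → (T.induce C).Connected →
      (⋃ n ∈ B, gvars (lab n)) ⊆ (⋃ n ∈ C, gvars (lab n)) → B ⊆ C := by
    intro B C hrB hrC hCc hsub n hnB
    by_cases hn : n = r
    · exact hn ▸ hrC
    obtain ⟨x, hxn, hxp⟩ := hNR n hn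
    have hxD : x ∈ ⋃ n ∈ C, gvars (lab n) := hsub (Set.mem_biUnion hnB hxn)
    obtain ⟨m, hmC, hxm⟩ := Set.mem_iUnion₂.1 hxD
    obtain ⟨hadj, hdist⟩ := hparent n hn
    exact key_tree_lemma hT hadj hdist (hconn x) hxn hxp hrC hCc hmC hxm
  exact le_antisymm (main A₁ A₂ h₁.1 h₂.1 h₂.2 (by rw [hv₁, hv₂]))
    (main A₂ A₁ h₂.1 h₁.1 h₁.2 (by rw [hv₁, hv₂]))
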